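/- If a graph G has a dominating K_t-model, then G contains a path v_1, v_2, …, v_t (on t distinct vertices, with v_i adjacent to v_{i+1}) such that deg_G(v_t) ≥ t − 1 and deg_G(v_i) ≥ i for all 1 ≤ i ≤ t − 1. -/

import Mathlib

open Classical in
noncomputable def chainAux {V : Type*} (G : SimpleGraph V) {n : ℕ} (T : Fin (n+1) → Set V)
    (hne : ∀ i, (T i).Nonempty) : ℕ → V
  | 0 => (hne ⟨n, Nat.lt_succ_self n⟩).choose
  | (k+1) =>
    if h : ∃ u, u ∈ T ⟨n - (k+1), Nat.lt_succ_of_le (Nat.sub_le n (k+1))⟩ ∧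
        G.Adj (chainAux G T hne k) u then h.choose
    else (hne ⟨n, Nat.lt_succ_self n⟩).choose

lemma chainAux_mem {V : Type*} (G : SimpleGraph V) {n : ℕ} (T : Fin (n+1) → Set V)
    (hne : ∀ i, (T i).Nonempty)
    (hdom : ∀ i j : Fin (n+1), i < j → ∀ v ∈ T j, ∃ u ∈ T i, G.Adj v u) :
    ∀ k, k ≤ n → chainAux G T hne k ∈ T ⟨n - k, Nat.lt_succ_of_le (Nat.sub_le n k)⟩ := by
  intro k
  induction k with
  | zero => intro _; exact (hne ⟨n, Nat.lt_succ_self n⟩).choose_spec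
  | succ k ih =>
    intro hk
    have hmem := ih (Nat.le_of_succ_le hk)
    have hij : (⟨n - (k+1), Nat.lt_succ_of_le (Nat.sub_le n (k+1))⟩ : Fin (n+1)) <
        ⟨n - k, Nat.lt_succ_of_le (Nat.sub_le n k)⟩ := by
      simp only [Fin.mk_lt_mk]; omega
    obtain ⟨u, hu, hadj⟩ := hdom _ _ hij _ hmem
    have h : ∃ u, u ∈ T ⟨n - (k+1), Nat.lt_succ_of_le (Nat.sub_le n (k+1))⟩ ∧
        G.Adj (chainAux G T hne k) u := ⟨u, hu, hadj⟩
    rw [chainAux, dif_pos h]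
    exact h.choose_spec.1

lemma chainAux_adj {V : Type*} (G : SimpleGraph V) {n : ℕ} (T : Fin (n+1) → Set V)
    (hne : ∀ i, (T i).Nonempty)
    (hdom : ∀ i j : Fin (n+1), i < j → ∀ v ∈ T j, ∃ u ∈ T i, G.Adj v u)
    {k : ℕ} (hk : k < n) :
    G.Adj (chainAux G T hne k) (chainAux G T hne (k+1)) := by
  have hmem := chainAux_mem G T hne hdom k (Nat.le_of_lt hk)
  have hij : (⟨n - (k+1), Nat.lt_succ_of_le (Nat.sub_le n (k+1))⟩ : Fin (n+1)) <
      ⟨n - k, Nat.lt_succ_of_le (Nat.sub_le n k)⟩ := by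
    simp only [Fin.mk_lt_mk]; omega
  obtain ⟨u, hu, hadj⟩ := hdom _ _ hij _ hmem
  have h : ∃ u, u ∈ T ⟨n - (k+1), Nat.lt_succ_of_le (Nat.sub_le n (k+1))⟩ ∧
      G.Adj (chainAux G T hne k) u := ⟨u, hu, hadj⟩
  rw [chainAux, dif_pos h]
  exact h.choose_spec.2

lemma card_le_degree_of_rep {V : Type*} [Fintype V] (G : SimpleGraph V) [DecidableRel G.Adj]
    {t : ℕ} (T : Fin t → Set V) (hdisj : Pairwise fun i j => Disjoint (T i) (T j))
    (x : V) (ι : Finset (Fin t)) (hx : ∀ j ∈ ι, ∃ u ∈ T j, G.Adj x u) :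
    ι.card ≤ G.degree x := by
  classical
  choose u hu hadj using hx
  rw [← SimpleGraph.card_neighborFinset_eq_degree]
  refine Finset.card_le_card_of_injOn (fun j => if h : j ∈ ι then u j h else x) ?_ ?_
  · intro j hj
    simp only [dif_pos hj, SimpleGraph.mem_neighborFinset]
    simpa [dif_pos (Finset.mem_coe.mp hj)] using hadj j hj
  · intro j1 hj1 j2 hj2 heq
    simp only [Finset.mem_coe] at hj1 hj2
    simp only [dif_pos hj1, dif_pos hj2] at heq
    by_contra hne'
    exact Set.disjoint_left.mp (hdisj hne') (hu j1 hj1) (heq ▸ hu j2 hj2)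

theorem exists_degree_path_aux {V : Type*} [Fintype V] (G : SimpleGraph V)
    [DecidableRel G.Adj] (t : ℕ)
    (h : ∃ T : Fin t → Set V,
      (∀ i, (T i).Nonempty) ∧
      (Pairwise fun i j => Disjoint (T i) (T j)) ∧
      (∀ i, (G.induce (T i)).Connected) ∧
      (∀ i j : Fin t, i < j → ∀ v ∈ T j, ∃ u ∈ T i, G.Adj v u)) :
    ∃ v : Fin t → V, Function.Injective v ∧
      (∀ (i : ℕ) (hi : i + 1 < t),
        G.Adj (v ⟨i, Nat.lt_of_succ_lt hi⟩) (v ⟨i + 1, hi⟩)) ∧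
      (∀ (i : ℕ) (hi : i < t),
        (i + 1 = t → t - 1 ≤ G.degree (v ⟨i, hi⟩)) ∧
        (i + 1 < t → i + 1 ≤ G.degree (v ⟨i, hi⟩))) := by
  obtain ⟨T, hne, hdisj, _, hdom⟩ := h
  match t, T, hne, hdisj, hdom with
  | 0, T, hne, hdisj, hdom =>
    exact ⟨Fin.elim0, fun a => a.elim0, fun i hi => by omega, fun i hi => by omega⟩
  | (n+1), T, hne, hdisj, hdom =>
    set c := chainAux G T hne with hc
    refine ⟨fun i => c (n - i.val), ?_, ?_, ?_⟩
    · -- injectivity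
      intro i j hij
      by_contra hne'
      have hi := chainAux_mem G T hne hdom (n - i.val) (Nat.sub_le n _)
      have hj := chainAux_mem G T hne hdom (n - j.val) (Nat.sub_le n _)
      have ei : (⟨n - (n - i.val), Nat.lt_succ_of_le (Nat.sub_le n _)⟩ : Fin (n+1)) = i :=
        Fin.ext (by have := i.isLt; simp; omega)
      have ej : (⟨n - (n - j.val), Nat.lt_succ_of_le (Nat.sub_le n _)⟩ : Fin (n+1)) = j :=
        Fin.ext (by have := j.isLt; simp; omega)
      rw [ei] at hi; rw [ej] at hj
      have hij' : c (n - i.val) = c (n - j.val) := hij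
      rw [hc] at hij'
      rw [← hij'] at hj
      exact Set.disjoint_left.mp (hdisj hne') hi hj
    · -- path adjacency
      intro i hi
      have hk : n - (i+1) < n := by omega
      have := chainAux_adj G T hne hdom hk
      have e : n - (i+1) + 1 = n - i := by omega
      rw [e] at this
      exact this.symm
    · -- degrees
      intro i hi
      have memi : c (n - i) ∈ T ⟨i, hi⟩ := by
        have := chainAux_mem G T hne hdom (n - i) (Nat.sub_le n _)
        have e : (⟨n - (n - i), Nat.lt_succ_of_le (Nat.sub_le n _)⟩ : Fin (n+1)) = ⟨i, hi⟩ :=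
          Fin.ext (by simp; omega)
        rwa [e] at this
      constructor
      · -- i+1 = t, i.e. i = n
        intro hit
        have hin : i = n := by omega
        have hcard : (Finset.univ.erase (⟨i, hi⟩ : Fin (n+1))).card = n := by
          rw [Finset.card_erase_of_mem (Finset.mem_univ _), Finset.card_univ,
            Fintype.card_fin]
          omega
        have key := card_le_degree_of_rep G T hdisj (c (n - i)) (Finset.univ.erase ⟨i, hi⟩) ?_
        · rw [hcard] at key
          have e : n + 1 - 1 = n := by omega
          show n + 1 - 1 ≤ G.degree (c (n - i))
          rw [e]; exact key
        · intro j hj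
          have hjn : j < (⟨i, hi⟩ : Fin (n+1)) := by
            have h1 := Finset.ne_of_mem_erase hj
            have h2 := j.isLt
            rw [Fin.lt_def]
            simp only [Fin.ne_iff_vne] at h1
            simp only [Fin.val_mk] at *
            omega
          exact hdom j _ hjn _ memi
      · -- i+1 < t
        intro hit
        have hin : i < n := by omega
        set ι : Finset (Fin (n+1)) :=
          insert ⟨i+1, by omega⟩ (Finset.Iio ⟨i, hi⟩) with hι
        have hni : (⟨i+1, by omega⟩ : Fin (n+1)) ∉ Finset.Iio (⟨i, hi⟩ : Fin (n+1)) := by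
          simp [Fin.lt_def]
        have hcard : ι.card = i + 1 := by
          rw [hι, Finset.card_insert_of_notMem hni, Fin.card_Iio]
        have key := card_le_degree_of_rep G T hdisj (c (n - i)) ι ?_
        · rw [hcard] at key
          exact key
        · intro j hj
          rw [hι, Finset.mem_insert] at hj
          rcases hj with hj | hj
          · subst hj
            refine ⟨c (n - (i+1)), ?_, ?_⟩
            · have := chainAux_mem G T hne hdom (n - (i+1)) (Nat.sub_le n _)
              have e : (⟨n - (n - (i+1)), Nat.lt_succ_of_le (Nat.sub_le n _)⟩ : Fin (n+1)) =
                  ⟨i+1, by omega⟩ := Fin.ext (by simp; omega)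
              rwa [e] at this
            · have hk : n - (i+1) < n := by omega
              have hadj := chainAux_adj G T hne hdom hk
              have e : n - (i+1) + 1 = n - i := by omega
              rw [e] at hadj
              exact hadj.symm
          · have hji : j < (⟨i, hi⟩ : Fin (n+1)) := Finset.mem_Iio.mp hj
            exact hdom j _ hji _ memi



/-- A *dominating K_t-model* in a graph G is a sequence (T 0, ..., T (t-1)) of pairwise
disjoint non-empty connected subgraphs of G such that for all i < j, every vertex of T j
has a neighbour (in G) in T i. -/
def SimpleGraph.IsDomKtModel {V : Type*} (G : SimpleGraph V) (t : ℕ) (T : Fin t → Set V) : Prop :=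
  (∀ i, (T i).Nonempty) ∧
  (Pairwise fun i j => Disjoint (T i) (T j)) ∧
  (∀ i, (G.induce (T i)).Connected) ∧
  (∀ i j : Fin t, i < j → ∀ v ∈ T j, ∃ u ∈ T i, G.Adj v u)

/-- G contains a dominating K_t-model. -/
def SimpleGraph.HasDomKtModel {V : Type*} (G : SimpleGraph V) (t : ℕ) : Prop :=
  ∃ T : Fin t → Set V, G.IsDomKtModel t T

/-- If a graph G has a dominating K_t-model, then G contains a path v_1, ..., v_t on t
distinct vertices (0-indexed here, so v i stands for v_{i+1}) such that deg(v_t) ≥ t - 1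
and deg(v_i) ≥ i for 1 ≤ i ≤ t - 1. -/
theorem exists_degree_path_of_hasDomKtModel {V : Type*} [Fintype V] (G : SimpleGraph V)
    [DecidableRel G.Adj] (t : ℕ) (h : G.HasDomKtModel t) :
    ∃ v : Fin t → V, Function.Injective v ∧
      (∀ (i : ℕ) (hi : i + 1 < t),
        G.Adj (v ⟨i, Nat.lt_of_succ_lt hi⟩) (v ⟨i + 1, hi⟩)) ∧
      (∀ (i : ℕ) (hi : i < t),
        (i + 1 = t → t - 1 ≤ G.degree (v ⟨i, hi⟩)) ∧
        (i + 1 < t → i + 1 ≤ G.degree (v ⟨i, hi⟩))) := by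
  obtain ⟨T, hT⟩ := h
  exact exists_degree_path_aux G t ⟨T, hT⟩
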